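/- arXiv:2604.14997 — 6 statements merged into one kernel-verified Lean document; each statement's English description precedes it below -/
import Mathlib

section
/- Let a < b be real numbers and h : [a,b] → ℝ a C² function such that h' has constant sign on [a,b] and h'' does not vanish on [a,b]. Then for all x, y ∈ [a,b], |h(x) - h(y)| ≥ M₁|x - y|², where M₁ = (1/2)·min_{z∈[a,b]}|h''(z)|. -/
open Set

/-- Monotonicity from a one-sided derivative bound on `Icc`. -/
lemma aux_mono (a b : ℝ) (f f' : ℝ → ℝ)
    (hd : ∀ x ∈ Icc a b, HasDerivWithinAt f (f' x) (Icc a b) x)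
    (h0 : ∀ x ∈ Icc a b, 0 ≤ f' x) : MonotoneOn f (Icc a b) := by
  apply monotoneOn_of_hasDerivWithinAt_nonneg (convex_Icc a b)
    (fun x hx => (hd x hx).continuousWithinAt) (f' := f')
  · intro x hx
    rw [interior_Icc] at hx ⊢
    exact (hd x (Ioo_subset_Icc_self hx)).mono Ioo_subset_Icc_self
  · intro x hx
    rw [interior_Icc] at hx
    exact h0 x (Ioo_subset_Icc_self hx)

lemma aux_core (a b M : ℝ) (hM : 0 ≤ M) (h h' h'' : ℝ → ℝ)
    (hd1 : ∀ x ∈ Icc a b, HasDerivWithinAt h (h' x) (Icc a b) x)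
    (hd2 : ∀ x ∈ Icc a b, HasDerivWithinAt h' (h'' x) (Icc a b) x)
    (hpos : ∀ t ∈ Icc a b, 0 ≤ h' t)
    (hcase : (∀ t ∈ Icc a b, M ≤ h'' t) ∨ (∀ t ∈ Icc a b, h'' t ≤ -M)) :
    ∀ x ∈ Icc a b, ∀ y ∈ Icc a b, y ≤ x → M / 2 * (x - y) ^ 2 ≤ h x - h y := by
  intro x hx y hy hyx
  have hsub : Icc y x ⊆ Icc a b := Icc_subset_Icc hy.1 hx.2
  rcases hcase with hc | hc
  · -- h'' ≥ M : h' t ≥ h' y + M (t - y) ≥ M (t - y) for t ∈ [y, x]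
    have hg : MonotoneOn (fun t => h' t - M * t) (Icc a b) := by
      apply aux_mono a b _ (fun t => h'' t - M)
      · intro t ht
        have := (hd2 t ht).sub ((hasDerivWithinAt_id t (Icc a b)).const_mul M)
        exact this.congr_deriv (by ring)
      · intro t ht; linarith [hc t ht]
    have key : ∀ t ∈ Icc y x, M * (t - y) ≤ h' t := by
      intro t ht
      have := hg hy (hsub ht) ht.1
      have := hpos y hy
      simp only at *
      nlinarith
    -- φ t = h t - M/2 * (t - y)^2 is monotone on [y, x]
    have hφ : MonotoneOn (fun t => h t - M / 2 * (t - y) ^ 2) (Icc y x) := by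
      apply aux_mono y x _ (fun t => h' t - M * (t - y))
      · intro t ht
        have d1 : HasDerivWithinAt h (h' t) (Icc y x) t := (hd1 t (hsub ht)).mono hsub
        have d2 : HasDerivWithinAt (fun t => M / 2 * (t - y) ^ 2)
            (M / 2 * (2 * (t - y) ^ 1 * 1)) (Icc y x) t :=
          (((hasDerivWithinAt_id t _).sub_const y).pow 2).const_mul (M / 2)
        have := d1.sub d2
        exact this.congr_deriv (by ring)
      · intro t ht; linarith [key t ht]
    have := hφ (left_mem_Icc.2 hyx) (right_mem_Icc.2 hyx) hyx
    simp only at this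
    nlinarith
  · -- h'' ≤ -M : h' t ≥ h' x + M (x - t) ≥ M (x - t) for t ∈ [y, x]
    have hg : MonotoneOn (fun t => -(h' t + M * t)) (Icc a b) := by
      apply aux_mono a b _ (fun t => -(h'' t + M))
      · intro t ht
        have := ((hd2 t ht).add ((hasDerivWithinAt_id t (Icc a b)).const_mul M)).neg
        exact this.congr_deriv (by ring)
      · intro t ht; linarith [hc t ht]
    have key : ∀ t ∈ Icc y x, M * (x - t) ≤ h' t := by
      intro t ht
      have := hg (hsub ht) hx ht.2
      have := hpos x hx
      simp only at *
      nlinarith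
    have hφ : MonotoneOn (fun t => h t + M / 2 * (x - t) ^ 2) (Icc y x) := by
      apply aux_mono y x _ (fun t => h' t - M * (x - t))
      · intro t ht
        have d1 : HasDerivWithinAt h (h' t) (Icc y x) t := (hd1 t (hsub ht)).mono hsub
        have d2 : HasDerivWithinAt (fun t => M / 2 * (x - t) ^ 2)
            (M / 2 * (2 * (x - t) ^ 1 * (0 - 1))) (Icc y x) t :=
          (((hasDerivWithinAt_const t _ x).sub (hasDerivWithinAt_id t _)).pow 2).const_mul (M / 2)
        have := d1.add d2
        exact this.congr_deriv (by ring)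
      · intro t ht; linarith [key t ht]
    have := hφ (left_mem_Icc.2 hyx) (right_mem_Icc.2 hyx) hyx
    simp only at this
    nlinarith

theorem stmt0 (a b : ℝ) (hab : a < b) (h h' h'' : ℝ → ℝ)
    (hd1 : ∀ x ∈ Icc a b, HasDerivWithinAt h (h' x) (Icc a b) x)
    (hd2 : ∀ x ∈ Icc a b, HasDerivWithinAt h' (h'' x) (Icc a b) x)
    (hcont : ContinuousOn h'' (Icc a b))
    (hsign : (∀ x ∈ Icc a b, 0 ≤ h' x) ∨ (∀ x ∈ Icc a b, h' x ≤ 0))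
    (hne : ∀ x ∈ Icc a b, h'' x ≠ 0) :
    ∀ x ∈ Icc a b, ∀ y ∈ Icc a b,
      (1/2) * sInf ((fun z => |h'' z|) '' Icc a b) * |x - y| ^ 2 ≤ |h x - h y| := by
  set M := sInf ((fun z => |h'' z|) '' Icc a b) with hMdef
  have hane : a ∈ Icc a b := left_mem_Icc.2 hab.le
  have hbdd : BddBelow ((fun z => |h'' z|) '' Icc a b) :=
    ⟨0, fun u ⟨z, _, hz⟩ => hz ▸ abs_nonneg _⟩
  have hM0 : 0 ≤ M :=
    le_csInf ⟨_, ⟨a, hane, rfl⟩⟩ (fun u ⟨z, _, hz⟩ => hz ▸ abs_nonneg _)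
  have hMle : ∀ z ∈ Icc a b, M ≤ |h'' z| := fun z hz => csInf_le hbdd ⟨z, hz, rfl⟩
  -- h'' has constant sign
  have hsign2 : (∀ t ∈ Icc a b, M ≤ h'' t) ∨ (∀ t ∈ Icc a b, h'' t ≤ -M) := by
    have hconst : (∀ t ∈ Icc a b, 0 < h'' t) ∨ (∀ t ∈ Icc a b, h'' t < 0) := by
      by_contra hcon
      push_neg at hcon
      obtain ⟨⟨u, hu, hu0⟩, ⟨v, hv, hv0⟩⟩ := hcon
      have hu0 : h'' u < 0 := lt_of_le_of_ne hu0 (hne u hu)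
      have hv0 : 0 < h'' v := lt_of_le_of_ne hv0 (Ne.symm (hne v hv))
      have hsubuv : uIcc u v ⊆ Icc a b := uIcc_subset_Icc hu hv
      have : (0 : ℝ) ∈ uIcc (h'' u) (h'' v) := by
        rw [mem_uIcc]; left; exact ⟨hu0.le, hv0.le⟩
      obtain ⟨c, hc, hc0⟩ := intermediate_value_uIcc (hcont.mono hsubuv) this
      exact hne c (hsubuv hc) hc0
    rcases hconst with hc | hc
    · left; intro t ht
      have := hMle t ht
      rwa [abs_of_pos (hc t ht)] at this
    · right; intro t ht
      have := hMle t ht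
      rw [abs_of_neg (hc t ht)] at this
      linarith
  intro x hx y hy
  have habs : |x - y| ^ 2 = (x - y) ^ 2 := sq_abs _
  rcases hsign with hp | hp
  · have core := aux_core a b M hM0 h h' h'' hd1 hd2 hp hsign2
    rcases le_total y x with hyx | hxy
    · have := core x hx y hy hyx
      rw [habs]
      calc (1/2) * M * (x - y)^2 = M / 2 * (x-y)^2 := by ring
        _ ≤ h x - h y := this
        _ ≤ |h x - h y| := le_abs_self _
    · have := core y hy x hx hxy
      rw [habs]
      calc (1/2) * M * (x - y)^2 = M / 2 * (y-x)^2 := by ring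
        _ ≤ h y - h x := this
        _ ≤ |h x - h y| := by rw [abs_sub_comm]; exact le_abs_self _
  · have core := aux_core a b M hM0 (fun t => -h t) (fun t => -h' t) (fun t => -h'' t)
      (fun t ht => (hd1 t ht).neg) (fun t ht => (hd2 t ht).neg)
      (fun t ht => by simpa using hp t ht)
      (by rcases hsign2 with hc | hc
          · right; intro t ht; simpa using hc t ht
          · left; intro t ht; have := hc t ht; linarith)
    rcases le_total y x with hyx | hxy
    · have := core x hx y hy hyx
      rw [habs]
      calc (1/2) * M * (x - y)^2 = M / 2 * (x-y)^2 := by ring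
        _ ≤ h y - h x := by linarith
        _ ≤ |h x - h y| := by rw [abs_sub_comm]; exact le_abs_self _
    · have := core y hy x hx hxy
      rw [habs]
      calc (1/2) * M * (x - y)^2 = M / 2 * (y-x)^2 := by ring
        _ ≤ h x - h y := by linarith
        _ ≤ |h x - h y| := le_abs_self _
end

section
/- Let f be a C² function on a closed interval [a,b] with f' > 0 on (a,b), f''(a) > 0, and f''(b) < 0. Then there exists r > 0 such that any C² function g on [a,b] with ‖g - f‖_{C²} ≤ r, g'(a) ≥ 0 and g'(b) ≥ 0 satisfies g' > 0 on (a,b) (hence g is strictly increasing on (a,b)). -/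
open Set

theorem stmt2 (a b : ℝ) (hab : a < b) (f f' f'' : ℝ → ℝ)
    (hf1 : ∀ x ∈ Icc a b, HasDerivWithinAt f (f' x) (Icc a b) x)
    (hf2 : ∀ x ∈ Icc a b, HasDerivWithinAt f' (f'' x) (Icc a b) x)
    (hf''c : ContinuousOn f'' (Icc a b))
    (hpos : ∀ x ∈ Ioo a b, 0 < f' x)
    (ha : 0 < f'' a) (hb : f'' b < 0) :
    ∃ r > (0:ℝ), ∀ g g' g'' : ℝ → ℝ,
      (∀ x ∈ Icc a b, HasDerivWithinAt g (g' x) (Icc a b) x) →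
      (∀ x ∈ Icc a b, HasDerivWithinAt g' (g'' x) (Icc a b) x) →
      ContinuousOn g'' (Icc a b) →
      (∀ x ∈ Icc a b, |g x - f x| + |g' x - f' x| + |g'' x - f'' x| ≤ r) →
      0 ≤ g' a → 0 ≤ g' b →
      ∀ x ∈ Ioo a b, 0 < g' x := by
  -- δ₁ near a where f'' > f'' a / 2
  have haI : a ∈ Icc a b := ⟨le_refl a, hab.le⟩
  have hbI : b ∈ Icc a b := ⟨hab.le, le_refl b⟩
  have h1 : ∀ᶠ y in nhdsWithin a (Icc a b), f'' a / 2 < f'' y :=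
    (hf''c a haI) (Ioi_mem_nhds (by linarith))
  have h2 : ∀ᶠ y in nhdsWithin b (Icc a b), f'' y < f'' b / 2 :=
    (hf''c b hbI) (Iio_mem_nhds (by linarith))
  rw [Filter.eventually_iff, Metric.mem_nhdsWithin_iff] at h1 h2
  obtain ⟨δ₁, hδ₁, H1⟩ := h1
  obtain ⟨δ₂, hδ₂, H2⟩ := h2
  set δ : ℝ := min (min δ₁ δ₂) ((b - a) / 2) / 2 with hδdef
  have h0 : 0 < min (min δ₁ δ₂) ((b - a) / 2) := lt_min (lt_min hδ₁ hδ₂) (by linarith)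
  have hδpos : 0 < δ := by simp only [hδdef]; linarith
  have hδ1 : δ < δ₁ := by
    have : min (min δ₁ δ₂) ((b - a) / 2) ≤ δ₁ := le_trans (min_le_left _ _) (min_le_left _ _)
    simp only [hδdef]; linarith
  have hδ2 : δ < δ₂ := by
    have : min (min δ₁ δ₂) ((b - a) / 2) ≤ δ₂ := le_trans (min_le_left _ _) (min_le_right _ _)
    simp only [hδdef]; linarith
  have hδab : a + δ < b - δ := by
    have : min (min δ₁ δ₂) ((b - a) / 2) ≤ (b - a) / 2 := min_le_right _ _
    simp only [hδdef]; linarith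
  -- minimum of f' on the compact middle
  have hK : Icc (a + δ) (b - δ) ⊆ Ioo a b := fun y hy =>
    ⟨by linarith [hy.1], by linarith [hy.2]⟩
  have hKsub : Icc (a + δ) (b - δ) ⊆ Icc a b := fun y hy =>
    ⟨(hK hy).1.le, (hK hy).2.le⟩
  have hf'c : ContinuousOn f' (Icc a b) := fun x hx => (hf2 x hx).continuousWithinAt
  obtain ⟨x₀, hx₀, hmin⟩ := (isCompact_Icc (a := a + δ) (b := b - δ)).exists_isMinOn
    (nonempty_Icc.mpr hδab.le) (hf'c.mono hKsub)
  have hm : 0 < f' x₀ := hpos x₀ (hK hx₀)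
  set m := f' x₀ with hmdef
  refine ⟨min (min (f'' a / 4) (-(f'' b) / 4)) (m / 2),
    lt_min (lt_min (by linarith) (by linarith)) (by linarith),
    fun g g' g'' hg1 hg2 hg''c hclose hga hgb x hx => ?_⟩
  set r : ℝ := min (min (f'' a / 4) (-(f'' b) / 4)) (m / 2) with hrdef
  have hra : r ≤ f'' a / 4 := le_trans (min_le_left _ _) (min_le_left _ _)
  have hrb : r ≤ -(f'' b) / 4 := le_trans (min_le_left _ _) (min_le_right _ _)
  have hrm : r ≤ m / 2 := min_le_right _ _
  -- basic bounds from hclose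
  have hkey : ∀ y ∈ Icc a b, |g' y - f' y| ≤ r ∧ |g'' y - f'' y| ≤ r := by
    intro y hy
    have := hclose y hy
    constructor <;> [skip; skip] <;>
      · have h1 := abs_nonneg (g y - f y)
        have h2 := abs_nonneg (g' y - f' y)
        have h3 := abs_nonneg (g'' y - f'' y)
        linarith
  have hg'cont : ContinuousOn g' (Icc a b) := fun y hy => (hg2 y hy).continuousWithinAt
  rcases lt_or_ge x (a + δ) with hxa | hxa
  · -- near a: g'' > 0 on [a, x], so g' strictly increasing
    have hxb : Icc a x ⊆ Icc a b := Icc_subset_Icc le_rfl hx.2.le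
    have hmono : StrictMonoOn g' (Icc a x) := by
      apply strictMonoOn_of_deriv_pos (convex_Icc a x) (hg'cont.mono hxb)
      intro y hy
      rw [interior_Icc] at hy
      have hyI : y ∈ Icc a b := ⟨hy.1.le, hy.2.le.trans hx.2.le⟩
      have hyd : |y - a| < δ₁ := by
        rw [abs_of_nonneg (by linarith [hy.1] : (0:ℝ) ≤ y - a)]
        have : y < a + δ := lt_trans hy.2 hxa
        linarith
      have hf''y : f'' a / 2 < f'' y := H1 ⟨by rwa [Metric.mem_ball, Real.dist_eq], hyI⟩
      have hg''y : 0 < g'' y := by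
        have := (hkey y hyI).2
        have := abs_le.mp this
        linarith [this.1]
      have hnd : HasDerivAt g' (g'' y) y :=
        (hg2 y hyI).hasDerivAt (Icc_mem_nhds hy.1 (lt_trans hy.2 hx.2))
      rw [hnd.deriv]; exact hg''y
    have := hmono ⟨le_refl a, hx.1.le⟩ ⟨hx.1.le, le_refl x⟩ hx.1
    linarith
  · rcases le_or_gt x (b - δ) with hxb | hxb
    · -- middle: g' ≥ m - r > 0
      have hxK : x ∈ Icc (a + δ) (b - δ) := ⟨hxa, hxb⟩
      have hfx : m ≤ f' x := hmin hxK
      have := (hkey x (hKsub hxK)).1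
      have := abs_le.mp this
      linarith [this.1]
    · -- near b: g'' < 0 on [x, b], so g' strictly decreasing
      have hxb' : Icc x b ⊆ Icc a b := Icc_subset_Icc hx.1.le le_rfl
      have hanti : StrictAntiOn g' (Icc x b) := by
        apply strictAntiOn_of_deriv_neg (convex_Icc x b) (hg'cont.mono hxb')
        intro y hy
        rw [interior_Icc] at hy
        have hyI : y ∈ Icc a b := ⟨hx.1.le.trans hy.1.le, hy.2.le⟩
        have hyd : |y - b| < δ₂ := by
          rw [abs_of_nonpos (by linarith [hy.2] : y - b ≤ 0)]
          have : b - δ < y := lt_trans hxb hy.1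
          linarith
        have hf''y : f'' y < f'' b / 2 := H2 ⟨by rwa [Metric.mem_ball, Real.dist_eq], hyI⟩
        have hg''y : g'' y < 0 := by
          have := (hkey y hyI).2
          have := abs_le.mp this
          linarith [this.2]
        have hnd : HasDerivAt g' (g'' y) y :=
          (hg2 y hyI).hasDerivAt (Icc_mem_nhds (lt_of_le_of_lt hx.1.le hy.1) hy.2)
        rw [hnd.deriv]; exact hg''y
      have := hanti ⟨le_refl x, hx.2.le⟩ ⟨hx.2.le, le_refl b⟩ hx.2
      linarith
end

section
/- Suppose p : (0,∞) → ℝ is continuously differentiable with p'(ξ) > 0 for all ξ > 0 and lim_{ξ→0⁺} ξ³p'(ξ) = 0. Then lim_{ξ→0⁺} ξ²p(ξ) = 0. -/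
open Set Filter

theorem stmt6 (p p' : ℝ → ℝ)
    (hd : ∀ ξ ∈ Ioi (0:ℝ), HasDerivAt p (p' ξ) ξ)
    (hc : ContinuousOn p' (Ioi 0))
    (hpos : ∀ ξ ∈ Ioi (0:ℝ), 0 < p' ξ)
    (hlim : Tendsto (fun ξ => ξ ^ 3 * p' ξ) (nhdsWithin 0 (Ioi 0)) (nhds 0)) :
    Tendsto (fun ξ => ξ ^ 2 * p ξ) (nhdsWithin 0 (Ioi 0)) (nhds 0) := by
  have hmono : StrictMonoOn p (Ioi 0) := by
    apply strictMonoOn_of_deriv_pos (convex_Ioi 0)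
    · exact fun x hx => ((hd x hx).continuousAt).continuousWithinAt
    · intro x hx
      rw [interior_Ioi] at hx
      rw [(hd x hx).deriv]
      exact hpos x hx
  rw [Metric.tendsto_nhdsWithin_nhds] at hlim ⊢
  intro ε hε
  obtain ⟨δ₁, hδ₁, h1⟩ := hlim ε hε
  set a := δ₁ / 2 with ha
  have ha0 : 0 < a := by positivity
  have ha1 : a < δ₁ := by simp [ha]; linarith
  have hbound : ∀ t ∈ Ioo (0:ℝ) δ₁, p' t ≤ ε / t ^ 3 := by
    intro t ht
    have hdist : dist t 0 < δ₁ := by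
      rw [Real.dist_eq, sub_zero, abs_of_pos ht.1]; exact ht.2
    have h2 := h1 ht.1 hdist
    rw [Real.dist_eq, sub_zero] at h2
    have h3 : t ^ 3 * p' t < ε := (le_abs_self _).trans_lt h2
    rw [le_div_iff₀ (pow_pos ht.1 3)]
    nlinarith
  set q : ℝ → ℝ := fun t => p t + ε / 2 * (t ^ 2)⁻¹ with hq
  have hqd : ∀ t ∈ Ioi (0:ℝ), HasDerivAt q (p' t - ε * (t ^ 3)⁻¹) t := by
    intro t ht
    have ht0 : (t:ℝ) ≠ 0 := ne_of_gt ht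
    have h2 : HasDerivAt (fun s : ℝ => (s ^ 2)⁻¹) (-(2 * t ^ 1) / (t ^ 2) ^ 2) t :=
      (hasDerivAt_pow 2 t).inv (pow_ne_zero 2 ht0)
    have := (hd t ht).add (h2.const_mul (ε / 2))
    refine this.congr_deriv ?_
    field_simp
    ring
  -- lower bound: for 0 < ξ < a, p a ≤ q ξ
  have hlow : ∀ ξ ∈ Ioo (0:ℝ) a, p a ≤ p ξ + ε / 2 * (ξ ^ 2)⁻¹ := by
    intro ξ hξ
    have hanti : AntitoneOn q (Icc ξ a) := by
      apply antitoneOn_of_deriv_nonpos (convex_Icc ξ a)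
      · intro x hx
        have hx0 : 0 < x := lt_of_lt_of_le hξ.1 hx.1
        exact ((hqd x hx0).continuousAt).continuousWithinAt
      · intro x hx
        rw [interior_Icc] at hx
        have hx0 : 0 < x := lt_trans hξ.1 hx.1
        exact (hqd x hx0).differentiableAt.differentiableWithinAt
      · intro x hx
        rw [interior_Icc] at hx
        have hx0 : 0 < x := lt_trans hξ.1 hx.1
        rw [(hqd x hx0).deriv]
        have := hbound x ⟨hx0, lt_trans hx.2 ha1⟩
        have hx3 : (0:ℝ) < x ^ 3 := pow_pos hx0 3
        rw [div_eq_mul_inv] at this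
        linarith
    have := hanti ⟨le_refl ξ, hξ.2.le⟩ ⟨hξ.2.le, le_refl a⟩ hξ.2.le
    have hqa : p a ≤ q a := by
      have : 0 ≤ ε / 2 * ((a ^ 2)⁻¹) := by positivity
      simp only [hq]; linarith
    calc p a ≤ q a := hqa
      _ ≤ q ξ := this
      _ = p ξ + ε / 2 * (ξ ^ 2)⁻¹ := rfl
  set C := |p a| with hC
  have hC0 : 0 ≤ C := abs_nonneg _
  refine ⟨min a (Real.sqrt (ε / (2 * (C + 1)))), by positivity, ?_⟩
  intro x hx hdx
  rw [Real.dist_eq, sub_zero] at hdx ⊢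
  have hx0 : (0:ℝ) < x := hx
  rw [abs_of_pos hx0] at hdx
  have hxa : x < a := lt_of_lt_of_le hdx (min_le_left _ _)
  have hxs : x < Real.sqrt (ε / (2 * (C + 1))) := lt_of_lt_of_le hdx (min_le_right _ _)
  have hx2 : x ^ 2 < ε / (2 * (C + 1)) := by
    rw [← Real.lt_sqrt hx0.le] at *
    exact hxs
  have hx2C : x ^ 2 * (C + 1) < ε / 2 := by
    have := (lt_div_iff₀ (by positivity : (0:ℝ) < 2 * (C + 1))).mp hx2
    nlinarith
  -- upper bound on p x
  have hup : p x ≤ p a := (hmono hx0 ha0 hxa).le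
  have hlo := hlow x ⟨hx0, hxa⟩
  have hxx : x ^ 2 * (x ^ 2)⁻¹ = 1 := mul_inv_cancel₀ (by positivity)
  have hpaC : p a ≤ C := le_abs_self _
  have hpaC' : -C ≤ p a := neg_abs_le _
  have hsq : (0:ℝ) < x ^ 2 := by positivity
  rw [abs_lt]
  constructor
  · -- -ε < x² p x
    have h5 : x ^ 2 * p a ≤ x ^ 2 * p x + x ^ 2 * (ε / 2 * (x ^ 2)⁻¹) := by nlinarith
    have h6 : x ^ 2 * (ε / 2 * (x ^ 2)⁻¹) = ε / 2 := by
      rw [← mul_assoc, mul_comm (x ^ 2) (ε / 2), mul_assoc, hxx, mul_one]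
    nlinarith
  · nlinarith
end

section
/- Let λ > 0, L > 0, and G_λ(x) = cosh(√λ(x - L⌊x/L⌋ - L/2))/(2√λ sinh(√λ L/2)). For every x ∈ (-L/2, 0): G_λ(x−y) − G_λ(x+y) > 0 for all y ∈ (−L/2, 0), and G_λ(x−y) − G_λ(x+y) = 0 for y ∈ {−L/2, 0}. -/
open Set

theorem stmt10 (l L : ℝ) (hl : 0 < l) (hL : 0 < L) :
    let G : ℝ → ℝ := fun x =>
      Real.cosh (Real.sqrt l * (x - L * (⌊x / L⌋ : ℝ) - L / 2)) /
        (2 * Real.sqrt l * Real.sinh (Real.sqrt l * L / 2))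
    ∀ x ∈ Ioo (-(L / 2)) (0:ℝ),
      (∀ y ∈ Ioo (-(L / 2)) (0:ℝ), 0 < G (x - y) - G (x + y)) ∧
      (∀ y : ℝ, y = -(L / 2) ∨ y = 0 → G (x - y) - G (x + y) = 0) := by
  intro G x hx
  obtain ⟨hx1, hx2⟩ := hx
  set s := Real.sqrt l with hs
  have hs0 : 0 < s := Real.sqrt_pos.mpr hl
  set D : ℝ := 2 * s * Real.sinh (s * L / 2) with hD
  have hD0 : 0 < D := by
    have : 0 < Real.sinh (s * L / 2) := Real.sinh_pos_iff.mpr (by positivity)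
    positivity
  have floor_neg : ∀ u : ℝ, -L < u → u < 0 → ⌊u / L⌋ = -1 := by
    intro u h1 h2
    rw [Int.floor_eq_iff]
    constructor
    · push_cast
      rw [le_div_iff₀ hL]
      linarith
    · push_cast
      have : u / L < 0 := div_neg_of_neg_of_pos h2 hL
      linarith
  have floor_zero : ∀ u : ℝ, 0 ≤ u → u < L → ⌊u / L⌋ = 0 := by
    intro u h1 h2
    rw [Int.floor_eq_zero_iff]
    constructor
    · exact div_nonneg h1 hL.le
    · rw [div_lt_one hL]; exact h2
  have hGneg : ∀ u : ℝ, -L < u → u < 0 → G u = Real.cosh (s * (u + L / 2)) / D := by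
    intro u h1 h2
    show Real.cosh (s * (u - L * (⌊u / L⌋ : ℝ) - L / 2)) / D = _
    rw [floor_neg u h1 h2]
    push_cast
    ring_nf
  have hGpos : ∀ u : ℝ, 0 ≤ u → u < L → G u = Real.cosh (s * (u - L / 2)) / D := by
    intro u h1 h2
    show Real.cosh (s * (u - L * (⌊u / L⌋ : ℝ) - L / 2)) / D = _
    rw [floor_zero u h1 h2]
    push_cast
    ring_nf
  constructor
  · intro y hy
    obtain ⟨hy1, hy2⟩ := hy
    have hxyneg : G (x + y) = Real.cosh (s * (x + y + L / 2)) / D :=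
      hGneg _ (by linarith) (by linarith)
    have key : ∀ a b : ℝ, |b| < |a| → 0 < Real.cosh (s * a) / D - Real.cosh (s * b) / D := by
      intro a b hab
      rw [sub_pos]
      refine (div_lt_div_iff_of_pos_right hD0).mpr (Real.cosh_lt_cosh.mpr ?_)
      rw [abs_mul, abs_mul, abs_of_pos hs0]
      exact mul_lt_mul_of_pos_left hab hs0
    rcases lt_or_ge (x - y) 0 with h | h
    · rw [hGneg _ (by linarith) h, hxyneg]
      exact key _ _ (by rw [abs_lt, abs_of_pos (show (0:ℝ) < x - y + L/2 by linarith)]; constructor <;> linarith)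
    · rw [hGpos _ h (by linarith), hxyneg]
      exact key _ _ (by rw [abs_lt, abs_of_neg (show x - y - L/2 < 0 by linarith)]; constructor <;> linarith)
  · intro y hy
    rcases hy with rfl | rfl
    · have h1 : G (x - -(L / 2)) = Real.cosh (s * x) / D := by
        rw [show x - -(L/2) = x + L/2 by ring, hGpos _ (by linarith) (by linarith)]
        ring_nf
      have h2 : G (x + -(L / 2)) = Real.cosh (s * x) / D := by
        rw [show x + -(L/2) = x - L/2 by ring, hGneg _ (by linarith) (by linarith)]
        ring_nf
      rw [h1, h2, sub_self]
    · simp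
end

section
/- Let λ > 0 and h : ℝ → ℝ be continuous, L-periodic, even, non-constant, and non-decreasing on (−L/2, 0). Then the function φ = G_λ * h (periodic convolution) satisfies φ'(x) > 0 for every x ∈ (−L/2, 0). -/
open Set Filter MeasureTheory intervalIntegral Metric Topology
open scoped Interval

lemma aux_mono_Icc {L : ℝ} (hL : 0 < L) {h : ℝ → ℝ} (hcont : Continuous h)
    (hmono : MonotoneOn h (Ioo (-(L / 2)) 0)) : MonotoneOn h (Icc (-(L / 2)) 0) := by
  intro a ha b hb hab
  rcases eq_or_lt_of_le hab with rfl | hab'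
  · exact le_refl _
  set m := (a + b) / 2 with hm_def
  have hm : m ∈ Ioo a b := ⟨by simp only [hm_def]; linarith, by simp only [hm_def]; linarith⟩
  have hIoo : Ioo a b ⊆ Ioo (-(L / 2)) 0 := fun t ht =>
    ⟨lt_of_le_of_lt ha.1 ht.1, lt_of_lt_of_le ht.2 hb.2⟩
  have h1 : h a ≤ h m := by
    have ht : Tendsto h (𝓝[>] a) (𝓝 (h a)) := (hcont.tendsto a).mono_left nhdsWithin_le_nhds
    have hev : ∀ᶠ t in 𝓝[>] a, h t ≤ h m := by
      filter_upwards [Ioo_mem_nhdsGT hm.1] with t ht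
      exact hmono (hIoo ⟨ht.1, ht.2.trans hm.2⟩) (hIoo hm) (le_of_lt ht.2)
    exact le_of_tendsto ht hev
  have h2 : h m ≤ h b := by
    have ht : Tendsto h (𝓝[<] b) (𝓝 (h b)) := (hcont.tendsto b).mono_left nhdsWithin_le_nhds
    have hev : ∀ᶠ t in 𝓝[<] b, h m ≤ h t := by
      filter_upwards [Ioo_mem_nhdsLT hm.2] with t ht
      exact hmono (hIoo hm) (hIoo ⟨hm.1.trans ht.1, ht.2⟩) (le_of_lt ht.1)
    exact ge_of_tendsto ht hev
  exact h1.trans h2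

lemma aux_reduce {L : ℝ} (hL : 0 < L) {h : ℝ → ℝ} (hper : Function.Periodic h L)
    (heven : ∀ x, h (-x) = h x) (t : ℝ) : ∃ r ∈ Icc (-(L / 2)) 0, h t = h r := by
  set n := ⌊t / L + 1 / 2⌋ with hn_def
  set t' := t - n * L with ht'_def
  have hfl1 : (n : ℝ) ≤ t / L + 1 / 2 := Int.floor_le _
  have hfl2 : t / L + 1 / 2 < n + 1 := Int.lt_floor_add_one _
  have h1 : (n : ℝ) * L ≤ t + L / 2 := by
    have h' : ((n : ℝ) - 1/2) * L ≤ t := (le_div_iff₀ hL).mp (by linarith)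
    nlinarith
  have h2 : t - L / 2 < n * L := by
    have h' : t < ((n : ℝ) + 1/2) * L := (div_lt_iff₀ hL).mp (by linarith)
    nlinarith
  have ht'1 : -(L / 2) ≤ t' := by simp only [ht'_def]; linarith
  have ht'2 : t' < L / 2 := by simp only [ht'_def]; linarith
  have hht' : h t = h t' := (hper.sub_int_mul_eq n).symm
  rcases le_or_gt 0 t' with hc | hc
  · exact ⟨-|t'|, ⟨by rw [abs_of_nonneg hc]; linarith, by simp [abs_nonneg]⟩,
      by rw [hht', abs_of_nonneg hc, heven t']⟩
  · exact ⟨-|t'|, ⟨by rw [abs_of_neg hc]; linarith, by simp [abs_nonneg]⟩,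
      by rw [hht', abs_of_neg hc, neg_neg]⟩

lemma aux_compare {L : ℝ} (hL : 0 < L) {h : ℝ → ℝ}
    (hper : Function.Periodic h L) (heven : ∀ x, h (-x) = h x)
    (hm : MonotoneOn h (Icc (-(L / 2)) 0)) {x u : ℝ}
    (hx : x ∈ Icc (-(L / 2)) 0) (hu : u ∈ Icc (-(L / 2)) 0) :
    h (x + u) ≤ h (x - u) := by
  obtain ⟨hx1, hx2⟩ := hx
  obtain ⟨hu1, hu2⟩ := hu
  have hxu : |x - u| ≤ L / 2 := by rw [abs_le]; constructor <;> linarith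
  have hRHS : h (x - u) = h (-|x - u|) := by
    rcases le_or_gt 0 (x - u) with hc | hc
    · rw [abs_of_nonneg hc, heven]
    · rw [abs_of_neg hc, neg_neg]
  have hp : -|x - u| ∈ Icc (-(L / 2)) 0 :=
    ⟨by linarith, by simp [abs_nonneg]⟩
  rcases le_or_gt (-(L / 2)) (x + u) with hA | hB
  · have hq : x + u ∈ Icc (-(L / 2)) 0 := ⟨hA, by linarith⟩
    have hpq : x + u ≤ -|x - u| := by
      rw [le_neg, abs_le]; constructor <;> linarith
    rw [hRHS]
    exact hm hq hp hpq
  · have heq : h (x + u) = h (-(x + u + L)) := by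
      rw [heven, ← hper (x + u)]
    have hq : -(x + u + L) ∈ Icc (-(L / 2)) 0 := ⟨by linarith, by linarith⟩
    have hpq : -(x + u + L) ≤ -|x - u| := by
      rw [neg_le_neg_iff, abs_le]; constructor <;> linarith
    rw [hRHS, heq]
    exact hm hq hp hpq

lemma aux_point {L : ℝ} (hL : 0 < L) {h : ℝ → ℝ} (hper : Function.Periodic h L)
    (heven : ∀ x, h (-x) = h x) (hm : MonotoneOn h (Icc (-(L / 2)) 0))
    {c : ℝ} (hc : c ∈ Ico (-(L / 2)) 0) (hstep : ∀ t ∈ Ioc c 0, h c < h t)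
    {x : ℝ} (hx : x ∈ Ioo (-(L / 2)) 0) :
    ∃ u ∈ Ioo (-(L / 2)) 0, h (x + u) < h (x - u) := by
  obtain ⟨hx1, hx2⟩ := hx
  obtain ⟨hc1, hc2⟩ := hc
  set γ := -c with hγ_def
  have hγ1 : 0 < γ := by simp only [hγ_def]; linarith
  have hγ2 : γ ≤ L / 2 := by simp only [hγ_def]; linarith
  obtain ⟨m, hP1, hP2, hP3, hP4, hP5, hP6⟩ :
      ∃ m, γ - L ≤ m ∧ m ≤ -γ ∧ 2 * x - γ < m ∧ m < 2 * x + γ ∧ x - L / 2 < m ∧ m < x := by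
    rcases lt_or_ge (-γ) x with hcase | hcase
    · exact ⟨-γ, by linarith, le_refl _, by linarith, by linarith, by linarith, hcase⟩
    · have hγL : γ < L / 2 := by linarith
      set lo := max (γ - L) (max (2 * x - γ) (x - L / 2)) with hlo_def
      set hi := min (-γ) (2 * x + γ) with hhi_def
      have hlohi : lo < hi := by
        exact max_lt (lt_min (by linarith) (by linarith))
          (max_lt (lt_min (by linarith) (by linarith)) (lt_min (by linarith) (by linarith)))
      refine ⟨(lo + hi) / 2, ?_, ?_, ?_, ?_, ?_, ?_⟩
      · have := le_max_left (γ - L) (max (2 * x - γ) (x - L / 2)); linarith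
      · have := min_le_left (-γ) (2 * x + γ); linarith
      · have := (le_max_right (2 * x - γ) (x - L / 2)).trans
          (le_max_right (γ - L) _); linarith [le_max_left (2 * x - γ) (x - L / 2),
          (le_max_left (2 * x - γ) (x - L / 2)).trans (le_max_right (γ - L) _)]
      · have := min_le_right (-γ) (2 * x + γ); linarith
      · have := (le_max_right (2 * x - γ) (x - L / 2)).trans (le_max_right (γ - L) _); linarith
      · have h1 := min_le_right (-γ) (2 * x + γ)
        have h2 : 2 * x + γ ≤ x := by linarith
        linarith
  refine ⟨m - x, ⟨by linarith, by linarith⟩, ?_⟩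
  have hxu : x - (m - x) = 2 * x - m := by ring
  have habs : |2 * x - m| < γ := by rw [abs_lt]; constructor <;> linarith
  have hRHS : h (x - (m - x)) = h (-|2 * x - m|) := by
    rw [hxu]
    rcases le_or_gt 0 (2 * x - m) with hd | hd
    · rw [abs_of_nonneg hd, heven]
    · rw [abs_of_neg hd, neg_neg]
  have hRHSgt : h c < h (-|2 * x - m|) :=
    hstep _ ⟨by simp only [hγ_def] at habs ⊢; linarith [abs_nonneg (2 * x - m), habs],
      by simp [abs_nonneg]⟩
  have hxm : x + (m - x) = m := by ring
  have hLHS : h (x + (m - x)) ≤ h c := by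
    rw [hxm]
    rcases le_or_gt (-(L / 2)) m with hcase2 | hcase2
    · exact hm ⟨hcase2, by linarith⟩ ⟨hc1, le_of_lt hc2⟩ (by linarith)
    · have heq : h m = h (-(m + L)) := by rw [heven, ← hper m]
      rw [heq]
      exact hm ⟨by linarith, by linarith⟩ ⟨hc1, le_of_lt hc2⟩
        (by simp only [hγ_def] at hP1 ⊢; linarith)
  calc h (x + (m - x)) ≤ h c := hLHS
    _ < h (-|2 * x - m|) := hRHSgt
    _ = h (x - (m - x)) := hRHS.symm

set_option maxHeartbeats 2000000 in
theorem stmt11 (l L : ℝ) (hl : 0 < l) (hL : 0 < L) (h : ℝ → ℝ)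
    (hcont : Continuous h) (hper : Function.Periodic h L)
    (heven : ∀ x, h (-x) = h x)
    (hnc : ∃ x y, h x ≠ h y)
    (hmono : MonotoneOn h (Ioo (-(L / 2)) 0)) :
    let G : ℝ → ℝ := fun x =>
      Real.cosh (Real.sqrt l * (x - L * (⌊x / L⌋ : ℝ) - L / 2)) /
        (2 * Real.sqrt l * Real.sinh (Real.sqrt l * L / 2))
    let φ : ℝ → ℝ := fun x => ∫ y in (-(L / 2))..(L / 2), G (x - y) * h y
    ∀ x ∈ Ioo (-(L / 2)) (0:ℝ), 0 < deriv φ x := by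
  intro G φ x hx
  obtain ⟨hx1, hx2⟩ := hx
  set s := Real.sqrt l with hs_def
  have hs : 0 < s := Real.sqrt_pos.mpr hl
  have hsinh : 0 < Real.sinh (s * L / 2) := Real.sinh_pos_iff.mpr (by positivity)
  have hD : 0 < 2 * s * Real.sinh (s * L / 2) := by positivity
  set g : ℝ → ℝ := fun y =>
    s * Real.sinh (s * (y - L * (⌊y / L⌋ : ℝ) - L / 2)) / (2 * s * Real.sinh (s * L / 2))
    with hg_def
  -- basic floor facts
  have hfr : ∀ y : ℝ, L * (⌊y / L⌋ : ℝ) ≤ y ∧ y < L * (⌊y / L⌋ : ℝ) + L := by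
    intro y
    have h1 : (⌊y / L⌋ : ℝ) ≤ y / L := Int.floor_le _
    have h2 : y / L < ⌊y / L⌋ + 1 := Int.lt_floor_add_one _
    have h3 : y / L * L = y := div_mul_cancel₀ y hL.ne'
    constructor <;> nlinarith
  have hfloor0 : ∀ y : ℝ, 0 ≤ y → y < L → ⌊y / L⌋ = 0 := by
    intro y h1 h2
    exact Int.floor_eq_zero_iff.mpr ⟨div_nonneg h1 hL.le, (div_lt_one hL).mpr h2⟩
  have hfloorm1 : ∀ y : ℝ, -L ≤ y → y < 0 → ⌊y / L⌋ = -1 := by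
    intro y h1 h2
    rw [Int.floor_eq_iff]
    push_cast
    constructor
    · rw [neg_le, ← neg_div, div_le_one hL]; linarith
    · have : y / L < 0 := div_neg_of_neg_of_pos h2 hL
      linarith
  -- boundedness of h
  obtain ⟨M, hM⟩ : ∃ M, ∀ y : ℝ, |h y| ≤ M := by
    obtain ⟨M0, hM0⟩ := (isCompact_Icc (a := (0:ℝ)) (b := L)).exists_bound_of_continuousOn
      hcont.continuousOn
    refine ⟨M0, fun y => ?_⟩
    have hmem : y - (⌊y / L⌋ : ℝ) * L ∈ Icc (0:ℝ) L := by
      have := hfr y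
      constructor <;> [linarith [this.1]; linarith [this.2] ]
    have : h y = h (y - (⌊y / L⌋ : ℝ) * L) := (hper.sub_int_mul_eq ⌊y / L⌋).symm
    rw [this]
    simpa [Real.norm_eq_abs] using hM0 _ hmem
  have hM0 : 0 ≤ M := le_trans (abs_nonneg _) (hM 0)
  -- bounds for the kernels
  have hargle : ∀ y : ℝ, |s * (y - L * (⌊y / L⌋ : ℝ) - L / 2)| ≤ s * L / 2 := by
    intro y
    obtain ⟨hr1, hr2⟩ := hfr y
    rw [abs_mul, abs_of_pos hs]
    have habs : |y - L * (⌊y / L⌋ : ℝ) - L / 2| ≤ L / 2 := by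
      rw [abs_le]; constructor <;> linarith
    nlinarith
  have hGbound : ∀ y : ℝ, |G y| ≤ Real.cosh (s * L / 2) / (2 * s * Real.sinh (s * L / 2)) := by
    intro y
    show |Real.cosh (s * (y - L * (⌊y / L⌋ : ℝ) - L / 2)) / (2 * s * Real.sinh (s * L / 2))| ≤ _
    rw [abs_div, abs_of_pos hD, abs_of_pos (Real.cosh_pos _)]
    have hc : Real.cosh (s * (y - L * (⌊y / L⌋ : ℝ) - L / 2)) ≤ Real.cosh (s * L / 2) := by
      apply Real.cosh_le_cosh.mpr
      rw [abs_of_nonneg (by positivity : (0:ℝ) ≤ s * L / 2)]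
      exact hargle y
    gcongr
  set Cg : ℝ := s * Real.sinh (s * L / 2) / (2 * s * Real.sinh (s * L / 2)) with hCg_def
  have hCg0 : 0 ≤ Cg := by positivity
  have hgbound : ∀ y : ℝ, |g y| ≤ Cg := by
    intro y
    simp only [hg_def, hCg_def]
    rw [abs_div, abs_of_pos hD, abs_mul, abs_of_pos hs, Real.abs_sinh]
    have hsle : Real.sinh |s * (y - L * (⌊y / L⌋ : ℝ) - L / 2)| ≤ Real.sinh (s * L / 2) :=
      Real.sinh_le_sinh.mpr (hargle y)
    gcongr
  -- measurability
  have hflm : Measurable fun y : ℝ => (⌊y / L⌋ : ℝ) :=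
    measurable_from_top.comp (Int.measurable_floor.comp (measurable_id.div_const L))
  have hargm : Measurable fun y : ℝ => s * (y - L * (⌊y / L⌋ : ℝ) - L / 2) :=
    ((measurable_id.sub (hflm.const_mul L)).sub_const (L / 2)).const_mul s
  have hGmeas : Measurable G :=
    (Real.continuous_cosh.measurable.comp hargm).div_const _
  have hgmeas : Measurable g :=
    ((Real.continuous_sinh.measurable.comp hargm).const_mul s).div_const _
  -- generic integrability of bounded measurable functions
  have hIntGen : ∀ (f : ℝ → ℝ) (C : ℝ), Measurable f → (∀ y, |f y| ≤ C) →
      ∀ a b : ℝ, IntervalIntegrable f volume a b := by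
    intro f C hfm hfC a b
    apply (_root_.intervalIntegrable_const (c := C)).mono_fun hfm.aestronglyMeasurable
    exact ae_of_all _ fun t => by
      simpa [Real.norm_eq_abs] using (hfC t).trans (le_abs_self C)
  -- the derivative of φ
  have hIoc : Ι (-(L / 2)) (L / 2) = Ioc (-(L / 2)) (L / 2) := uIoc_of_le (by linarith)
  have hder : HasDerivAt φ (∫ t in (-(L / 2))..(L / 2), g (x - t) * h t) x := by
    set ε := (x + L / 2) / 2 with hε_def
    have hε : 0 < ε := by simp only [hε_def]; linarith
    set Ψ : ℝ → ℝ := fun z => Real.cosh (s * z - s * L / 2) / (2 * s * Real.sinh (s * L / 2))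
      with hΨ_def
    have hψderiv : ∀ z : ℝ, HasDerivAt Ψ
        (s * Real.sinh (s * z - s * L / 2) / (2 * s * Real.sinh (s * L / 2))) z := by
      intro z
      have h1 : HasDerivAt (fun z : ℝ => s * z - s * L / 2) s z := by
        simpa using ((hasDerivAt_id z).const_mul s).sub_const (s * L / 2)
      have h3 := ((Real.hasDerivAt_cosh _).comp z h1).div_const (2 * s * Real.sinh (s * L / 2))
      exact h3.congr_deriv (by ring)
    have hψlip : LipschitzOnWith (Real.toNNReal Cg) Ψ (Icc 0 L) := by
      apply (convex_Icc 0 L).lipschitzOnWith_of_nnnorm_hasDerivWithin_le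
        (f' := fun z => s * Real.sinh (s * z - s * L / 2) / (2 * s * Real.sinh (s * L / 2)))
        (fun z _ => (hψderiv z).hasDerivWithinAt)
      intro z hz
      rw [← NNReal.coe_le_coe, coe_nnnorm, Real.norm_eq_abs, Real.coe_toNNReal _ hCg0, hCg_def,
        abs_div, abs_of_pos hD, abs_mul, abs_of_pos hs, Real.abs_sinh]
      have harg : |s * z - s * L / 2| ≤ s * L / 2 := by
        rw [abs_le]
        constructor
        · nlinarith [hz.1, hz.2]
        · nlinarith [hz.1, hz.2]
      gcongr
      exact Real.sinh_le_sinh.mpr harg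
    have hGΨ : ∀ y : ℝ, -L < y → y < L → G y = Ψ |y| := by
      intro y h1 h2
      have hGy : G y = Real.cosh (s * (y - L * ((⌊y / L⌋ : ℤ) : ℝ) - L / 2)) /
          (2 * s * Real.sinh (s * L / 2)) := rfl
      rcases le_or_gt 0 y with hy | hy
      · rw [hGy, hfloor0 y hy h2]
        simp only [hΨ_def]
        rw [abs_of_nonneg hy]
        push_cast
        ring_nf
      · rw [hGy, hfloorm1 y h1.le hy]
        simp only [hΨ_def]
        rw [abs_of_neg hy,
          show s * -y - s * L / 2 = -(s * (y - L * ((-1 : ℤ) : ℝ) - L / 2)) by push_cast; ring,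
          Real.cosh_neg]
    have hrange : ∀ x' t : ℝ, x' ∈ ball x ε → t ∈ Ioc (-(L / 2)) (L / 2) →
        -L < x' - t ∧ x' - t < L := by
      intro x' t hx' ht
      rw [mem_ball, Real.dist_eq, abs_lt] at hx'
      simp only [hε_def] at hx'
      exact ⟨by linarith [ht.2, hx'.1], by linarith [ht.1, hx'.2]⟩
    have h_lip : ∀ᵐ t : ℝ ∂volume, t ∈ Ι (-(L / 2)) (L / 2) →
        LipschitzOnWith (Real.nnabs (Cg * M)) (fun x' => G (x' - t) * h t) (ball x ε) := by
      apply ae_of_all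
      intro t ht
      rw [hIoc] at ht
      apply LipschitzOnWith.of_dist_le_mul
      intro x1 h1 x2 h2
      obtain ⟨hr1a, hr1b⟩ := hrange x1 t h1 ht
      obtain ⟨hr2a, hr2b⟩ := hrange x2 t h2 ht
      rw [Real.dist_eq, Real.dist_eq, hGΨ _ hr1a hr1b, hGΨ _ hr2a hr2b]
      have habs1 : |x1 - t| ∈ Icc (0:ℝ) L :=
        ⟨abs_nonneg _, by rw [abs_le]; exact ⟨by linarith, by linarith⟩⟩
      have habs2 : |x2 - t| ∈ Icc (0:ℝ) L :=
        ⟨abs_nonneg _, by rw [abs_le]; exact ⟨by linarith, by linarith⟩⟩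
      have hlipd := hψlip.dist_le_mul _ habs1 _ habs2
      rw [Real.dist_eq, Real.dist_eq, Real.coe_toNNReal _ hCg0] at hlipd
      have htri : |(|x1 - t| - |x2 - t|)| ≤ |x1 - x2| := by
        have h5 := abs_abs_sub_abs_le_abs_sub (x1 - t) (x2 - t)
        have h6 : x1 - t - (x2 - t) = x1 - x2 := by ring
        rwa [h6] at h5
      calc abs (Ψ |x1 - t| * h t - Ψ |x2 - t| * h t)
          = abs (Ψ |x1 - t| - Ψ |x2 - t|) * |h t| := by rw [← sub_mul, abs_mul]
        _ ≤ (Cg * |(|x1 - t| - |x2 - t|)|) * M :=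
            mul_le_mul hlipd (hM t) (abs_nonneg _) (mul_nonneg hCg0 (abs_nonneg _))
        _ ≤ (Cg * |x1 - x2|) * M := by
            have := mul_le_mul_of_nonneg_left htri hCg0
            nlinarith [hM0]
        _ = Cg * M * |x1 - x2| := by ring
        _ = ↑(Real.nnabs (Cg * M)) * |x1 - x2| := by
            rw [Real.coe_nnabs, abs_of_nonneg (mul_nonneg hCg0 hM0)]
    have haex : ∀ᵐ t : ℝ, t ≠ x := by
      rw [ae_iff]
      have hset : {t : ℝ | ¬t ≠ x} = {x} := by ext t; simp
      rw [hset]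
      exact measure_singleton x
    have h_diff : ∀ᵐ t : ℝ ∂volume, t ∈ Ι (-(L / 2)) (L / 2) →
        HasDerivAt (fun x' => G (x' - t) * h t) (g (x - t) * h t) x := by
      filter_upwards [haex] with t htne hmem
      rw [hIoc] at hmem
      have hy1 : -L < x - t := by linarith [hmem.2]
      have hy2 : x - t < L := by linarith [hmem.1]
      have hyne : x - t ≠ 0 := sub_ne_zero.mpr htne.symm
      rcases hyne.lt_or_gt with hneg | hpos
      · -- x - t < 0 : use cosh (s * (x' - t) + s * L / 2)
        have hfl : ⌊(x - t) / L⌋ = -1 := hfloorm1 _ hy1.le hneg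
        have hgeq : g (x - t) = s * Real.sinh (s * (x - t) + s * L / 2) /
            (2 * s * Real.sinh (s * L / 2)) := by
          simp only [hg_def]
          rw [hfl]
          push_cast
          ring_nf
        rw [hgeq]
        have hd1 : HasDerivAt (fun x' : ℝ => Real.cosh (s * (x' - t) + s * L / 2) /
            (2 * s * Real.sinh (s * L / 2)) * h t)
            (s * Real.sinh (s * (x - t) + s * L / 2) /
              (2 * s * Real.sinh (s * L / 2)) * h t) x := by
          have hin : HasDerivAt (fun x' : ℝ => s * (x' - t) + s * L / 2) s x := by
            simpa using (((hasDerivAt_id x).sub_const t).const_mul s).add_const (s * L / 2)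
          have hcomp := (((Real.hasDerivAt_cosh _).comp x hin).div_const
            (2 * s * Real.sinh (s * L / 2))).mul_const (h t)
          exact hcomp.congr_deriv (by ring)
        apply hd1.congr_of_eventuallyEq
        have hopen : IsOpen {x' : ℝ | -L < x' - t ∧ x' - t < 0} :=
          (isOpen_lt continuous_const (continuous_id.sub continuous_const)).inter
            (isOpen_lt (continuous_id.sub continuous_const) continuous_const)
        filter_upwards [hopen.mem_nhds ⟨hy1, hneg⟩] with x' hx'
        have hfl' : ⌊(x' - t) / L⌋ = -1 := hfloorm1 _ hx'.1.le hx'.2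
        have hGx : G (x' - t) = Real.cosh (s * ((x' - t) - L * ((⌊(x' - t) / L⌋ : ℤ) : ℝ) - L / 2)) /
            (2 * s * Real.sinh (s * L / 2)) := rfl
        rw [hGx, hfl']
        push_cast
        ring_nf
      · -- 0 < x - t : use cosh (s * (x' - t) - s * L / 2)
        have hfl : ⌊(x - t) / L⌋ = 0 := hfloor0 _ hpos.le hy2
        have hgeq : g (x - t) = s * Real.sinh (s * (x - t) - s * L / 2) /
            (2 * s * Real.sinh (s * L / 2)) := by
          simp only [hg_def]
          rw [hfl]
          push_cast
          ring_nf
        rw [hgeq]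
        have hd1 : HasDerivAt (fun x' : ℝ => Real.cosh (s * (x' - t) - s * L / 2) /
            (2 * s * Real.sinh (s * L / 2)) * h t)
            (s * Real.sinh (s * (x - t) - s * L / 2) /
              (2 * s * Real.sinh (s * L / 2)) * h t) x := by
          have hin : HasDerivAt (fun x' : ℝ => s * (x' - t) - s * L / 2) s x := by
            simpa using (((hasDerivAt_id x).sub_const t).const_mul s).sub_const (s * L / 2)
          have hcomp := (((Real.hasDerivAt_cosh _).comp x hin).div_const
            (2 * s * Real.sinh (s * L / 2))).mul_const (h t)
          exact hcomp.congr_deriv (by ring)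
        apply hd1.congr_of_eventuallyEq
        have hopen : IsOpen {x' : ℝ | 0 < x' - t ∧ x' - t < L} :=
          (isOpen_lt continuous_const (continuous_id.sub continuous_const)).inter
            (isOpen_lt (continuous_id.sub continuous_const) continuous_const)
        filter_upwards [hopen.mem_nhds ⟨hpos, hy2⟩] with x' hx'
        have hfl' : ⌊(x' - t) / L⌋ = 0 := hfloor0 _ hx'.1.le hx'.2
        have hGx : G (x' - t) = Real.cosh (s * ((x' - t) - L * ((⌊(x' - t) / L⌋ : ℤ) : ℝ) - L / 2)) /
            (2 * s * Real.sinh (s * L / 2)) := rfl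
        rw [hGx, hfl']
        push_cast
        ring_nf
    have hF_meas : ∀ᶠ x' in 𝓝 x, AEStronglyMeasurable (fun t => G (x' - t) * h t)
        (volume.restrict (Ι (-(L / 2)) (L / 2))) :=
      Filter.Eventually.of_forall fun x' =>
        ((hGmeas.comp (measurable_const.sub measurable_id)).mul hcont.measurable).aestronglyMeasurable
    have hF_int : IntervalIntegrable (fun t => G (x - t) * h t) volume (-(L / 2)) (L / 2) := by
      apply hIntGen _ (Real.cosh (s * L / 2) / (2 * s * Real.sinh (s * L / 2)) * M)
        ((hGmeas.comp (measurable_const.sub measurable_id)).mul hcont.measurable)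
      intro t
      rw [Pi.mul_apply, abs_mul]
      exact mul_le_mul (hGbound _) (hM _) (abs_nonneg _)
        (div_nonneg (Real.cosh_pos _).le hD.le)
    have hF'_meas : AEStronglyMeasurable (fun t => g (x - t) * h t)
        (volume.restrict (Ι (-(L / 2)) (L / 2))) :=
      ((hgmeas.comp (measurable_const.sub measurable_id)).mul hcont.measurable).aestronglyMeasurable
    have hbound_int : IntervalIntegrable (fun _ : ℝ => Cg * M) volume (-(L / 2)) (L / 2) :=
      _root_.intervalIntegrable_const
    exact (intervalIntegral.hasDerivAt_integral_of_dominated_loc_of_lip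
      (bound := fun _ => Cg * M) (ball_mem_nhds x hε) hF_meas hF_int hF'_meas h_lip hbound_int h_diff).2
  rw [hder.deriv]
  -- change of variables
  set f : ℝ → ℝ := fun u => g u * h (x - u) with hf_def
  have hfmeas : Measurable f :=
    hgmeas.mul (hcont.comp (continuous_const.sub continuous_id)).measurable
  have hfbound : ∀ u, |f u| ≤ Cg * M := by
    intro u
    simp only [hf_def, abs_mul]
    exact mul_le_mul (hgbound u) (hM _) (abs_nonneg _) hCg0
  have hfint : ∀ a b : ℝ, IntervalIntegrable f volume a b := hIntGen f (Cg * M) hfmeas hfbound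
  have hf2meas : Measurable (fun u => f (-u)) := hfmeas.comp measurable_neg
  have hf2int : ∀ a b : ℝ, IntervalIntegrable (fun u => f (-u)) volume a b :=
    hIntGen _ (Cg * M) hf2meas (fun u => hfbound (-u))
  have e1 : (∫ t in (-(L / 2))..(L / 2), g (x - t) * h t)
      = ∫ u in (x - L / 2)..(x + L / 2), f u := by
    have heqf : (fun t => g (x - t) * h t) = fun t => f (x - t) := by
      funext t; simp only [hf_def, sub_sub_cancel]
    rw [heqf, intervalIntegral.integral_comp_sub_left f x, sub_neg_eq_add]
  have hgper : ∀ u : ℝ, g (u + L) = g u := by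
    intro u
    have hfl : ⌊(u + L) / L⌋ = ⌊u / L⌋ + 1 := by
      rw [show (u + L) / L = u / L + 1 by field_simp]
      exact Int.floor_add_one _
    simp only [hg_def]
    rw [hfl]
    push_cast
    ring_nf
  have hfper : Function.Periodic f L := by
    intro u
    simp only [hf_def]
    rw [hgper u, show x - (u + L) = x - u - L by ring, hper.sub_eq]
  have e2 : (∫ u in (x - L / 2)..(x + L / 2), f u) = ∫ u in (-(L / 2))..(L / 2), f u := by
    have h2 := hfper.intervalIntegral_add_eq (x - L / 2) (-(L / 2))
    rw [show x - L / 2 + L = x + L / 2 by ring, show -(L / 2) + L = L / 2 by ring] at h2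
    exact h2
  have e3 : (∫ u in (-(L / 2))..(L / 2), f u)
      = (∫ u in (-(L / 2))..(0:ℝ), f u) + ∫ u in (0:ℝ)..(L / 2), f u :=
    (integral_add_adjacent_intervals (hfint _ _) (hfint _ _)).symm
  have e4 : (∫ u in (0:ℝ)..(L / 2), f u) = ∫ u in (-(L / 2))..(0:ℝ), f (-u) := by
    have h4 := intervalIntegral.integral_comp_neg (a := -(L / 2)) (b := (0:ℝ)) f
    simp only [neg_zero, neg_neg] at h4
    exact h4.symm
  set F : ℝ → ℝ := fun u => g u * (h (x - u) - h (x + u)) with hF_def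
  have hFmeas : Measurable F := by
    apply hgmeas.mul
    exact ((hcont.comp (continuous_const.sub continuous_id)).sub
      (hcont.comp (continuous_const.add continuous_id))).measurable
  have hFbound : ∀ u, |F u| ≤ Cg * (M + M) := by
    intro u
    simp only [hF_def, abs_mul]
    apply mul_le_mul (hgbound u) ?_ (abs_nonneg _) hCg0
    calc |h (x - u) - h (x + u)| ≤ |h (x - u)| + |h (x + u)| := abs_sub _ _
      _ ≤ M + M := add_le_add (hM _) (hM _)
  have hFint : ∀ a b : ℝ, IntervalIntegrable F volume a b :=
    hIntGen F (Cg * (M + M)) hFmeas hFbound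
  have hae0 : ∀ᵐ u : ℝ, u ≠ (0:ℝ) := by
    rw [ae_iff]
    have hset : {u : ℝ | ¬u ≠ 0} = {0} := by ext u; simp
    rw [hset]
    exact measure_singleton 0
  have e5 : (∫ u in (-(L / 2))..(0:ℝ), f u) + (∫ u in (-(L / 2))..(0:ℝ), f (-u))
      = ∫ u in (-(L / 2))..(0:ℝ), F u := by
    rw [← intervalIntegral.integral_add (hfint _ _) (hf2int _ _)]
    apply intervalIntegral.integral_congr_ae
    filter_upwards [hae0] with u hu0 humem
    rw [uIoc_of_le (by linarith : -(L / 2) ≤ (0:ℝ))] at humem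
    obtain ⟨hu1, hu2⟩ := humem
    have hu2' : u < 0 := lt_of_le_of_ne hu2 hu0
    have hgodd : g (-u) = -g u := by
      have hfl1 : ⌊(-u) / L⌋ = 0 := hfloor0 _ (by linarith) (by linarith)
      have hfl2 : ⌊u / L⌋ = -1 := hfloorm1 _ (by linarith) hu2'
      simp only [hg_def]
      rw [hfl1, hfl2]
      push_cast
      rw [show s * (-u - L * 0 - L / 2) = -(s * (u - L * (-1) - L / 2)) by ring, Real.sinh_neg]
      ring
    simp only [hf_def, hF_def, sub_neg_eq_add, hgodd]
    ring
  rw [e1, e2, e3, e4, e5]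
  -- positivity
  have hmIcc := aux_mono_Icc hL hcont hmono
  have hxIcc : x ∈ Icc (-(L / 2)) 0 := ⟨hx1.le, hx2.le⟩
  have hlt : h (-(L / 2)) < h 0 := by
    have hle : h (-(L / 2)) ≤ h 0 :=
      hmIcc ⟨le_refl _, by linarith⟩ ⟨by linarith, le_refl _⟩ (by linarith)
    rcases eq_or_lt_of_le hle with heq | hlt'
    · exfalso
      obtain ⟨a, b, hab⟩ := hnc
      have hconst : ∀ r ∈ Icc (-(L / 2)) (0:ℝ), h r = h (-(L / 2)) := by
        intro r hr
        have h1 := hmIcc ⟨le_refl _, by linarith⟩ hr hr.1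
        have h2 := hmIcc hr ⟨by linarith, le_refl _⟩ hr.2
        linarith
      obtain ⟨ra, hra, hha⟩ := aux_reduce hL hper heven a
      obtain ⟨rb, hrb, hhb⟩ := aux_reduce hL hper heven b
      exact hab (by rw [hha, hhb, hconst ra hra, hconst rb hrb])
    · exact hlt'
  set S : Set ℝ := {t | t ∈ Icc (-(L / 2)) 0 ∧ h t = h (-(L / 2))} with hS_def
  have hSne : (-(L / 2)) ∈ S := ⟨⟨le_refl _, by linarith⟩, rfl⟩
  have hSbdd : BddAbove S := ⟨0, fun t ht => ht.1.2⟩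
  have hSclosed : IsClosed S := by
    have hSeq : S = Icc (-(L / 2)) 0 ∩ h ⁻¹' {h (-(L / 2))} := by
      ext t; simp [hS_def]
    rw [hSeq]
    exact isClosed_Icc.inter (isClosed_singleton.preimage hcont)
  set c := sSup S with hc_def
  have hcS : c ∈ S := hSclosed.csSup_mem ⟨_, hSne⟩ hSbdd
  have hc0 : c < 0 := by
    rcases eq_or_lt_of_le hcS.1.2 with he | hl2
    · exfalso
      rw [he] at hcS
      exact absurd hcS.2 (by linarith [hlt] : h 0 ≠ h (-(L / 2)))
    · exact hl2
  have hstep : ∀ t ∈ Ioc c 0, h c < h t := by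
    intro t ht
    have h1 : h c ≤ h t := hmIcc hcS.1 ⟨le_trans hcS.1.1 ht.1.le, ht.2⟩ ht.1.le
    rcases eq_or_lt_of_le h1 with he | hl2
    · exfalso
      have htS : t ∈ S := ⟨⟨le_trans hcS.1.1 ht.1.le, ht.2⟩, by rw [← he, hcS.2]⟩
      exact absurd (le_csSup hSbdd htS) (not_le.mpr ht.1)
    · exact hl2
  obtain ⟨u₀, hu₀, hltu⟩ := aux_point hL hper heven hmIcc ⟨hcS.1.1, hc0⟩ hstep ⟨hx1, hx2⟩
  have hgvalneg : ∀ u : ℝ, -L < u → u < 0 →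
      g u = s * Real.sinh (s * (u + L / 2)) / (2 * s * Real.sinh (s * L / 2)) := by
    intro u h1 h2
    simp only [hg_def]
    rw [hfloorm1 u h1.le h2]
    push_cast
    ring_nf
  have hFu₀ : 0 < F u₀ := by
    apply mul_pos
    · rw [hgvalneg u₀ (by linarith [hu₀.1]) hu₀.2]
      apply div_pos (mul_pos hs (Real.sinh_pos_iff.mpr (by nlinarith [hu₀.1]))) hD
    · exact sub_pos.mpr hltu
  have hFcont : ContinuousAt F u₀ := by
    have hmem : u₀ ∈ Ioo (-L) (0:ℝ) := ⟨by linarith [hu₀.1], hu₀.2⟩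
    have heqF : (fun u => s * Real.sinh (s * (u + L / 2)) /
        (2 * s * Real.sinh (s * L / 2)) * (h (x - u) - h (x + u))) =ᶠ[𝓝 u₀] F := by
      filter_upwards [isOpen_Ioo.mem_nhds hmem] with u hu
      simp only [hF_def]
      rw [hgvalneg u hu.1 hu.2]
    refine ContinuousAt.congr ?_ heqF
    apply Continuous.continuousAt
    exact ((continuous_const.mul (Real.continuous_sinh.comp
      (continuous_const.mul (continuous_id.add continuous_const)))).div_const _).mul
      ((hcont.comp (continuous_const.sub continuous_id)).sub
        (hcont.comp (continuous_const.add continuous_id)))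
  have hev2 : ∀ᶠ u in 𝓝 u₀, 0 < F u := hFcont.eventually_mem (Ioi_mem_nhds hFu₀)
  rw [Metric.eventually_nhds_iff] at hev2
  obtain ⟨δ, hδ0, hδ⟩ := hev2
  set α := max (u₀ - δ / 2) (-(L / 2)) with hα_def
  set β := min (u₀ + δ / 2) 0 with hβ_def
  have hαu : α < u₀ := max_lt (by linarith) hu₀.1
  have huβ : u₀ < β := lt_min (by linarith) hu₀.2
  have hα1 : -(L / 2) ≤ α := le_max_right _ _
  have hβ1 : β ≤ 0 := min_le_right _ _
  have hpos : ∀ u : ℝ, u ∈ Ioo α β → 0 < F u := by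
    intro u hu
    apply hδ
    rw [Real.dist_eq, abs_lt]
    have hh1 := le_max_left (u₀ - δ / 2) (-(L / 2))
    have hh2 := min_le_left (u₀ + δ / 2) (0:ℝ)
    constructor
    · have := hu.1; rw [← hα_def] at hh1; linarith
    · have := hu.2; rw [← hβ_def] at hh2; linarith
  have hFnonneg : ∀ u ∈ Icc (-(L / 2)) (0:ℝ), 0 ≤ F u := by
    intro u hu
    rcases eq_or_lt_of_le hu.2 with he | hlt2
    · simp [hF_def, he]
    · apply mul_nonneg
      · rcases eq_or_lt_of_le hu.1 with he2 | hlt3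
        · rw [← he2, hgvalneg (-(L / 2)) (by linarith) (by linarith)]
          simp
        · rw [hgvalneg u (by linarith) hlt2]
          apply div_nonneg _ hD.le
          exact mul_nonneg hs.le (Real.sinh_nonneg_iff.mpr (mul_nonneg hs.le (by linarith)))
      · exact sub_nonneg.mpr (aux_compare hL hper heven hmIcc hxIcc hu)
  have hn1 : 0 ≤ ∫ u in (-(L / 2))..α, F u :=
    integral_nonneg hα1 (fun u hu => hFnonneg u ⟨hu.1, by linarith [hu.2, hαu, huβ, hβ1]⟩)
  have hn2 : 0 ≤ ∫ u in β..(0:ℝ), F u :=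
    integral_nonneg hβ1 (fun u hu => hFnonneg u ⟨by linarith [hu.1, hα1, hαu, huβ], hu.2⟩)
  have hmid : 0 < ∫ u in α..β, F u :=
    intervalIntegral_pos_of_pos_on (hFint α β) hpos (hαu.trans huβ)
  have hsplit1 := integral_add_adjacent_intervals (hFint (-(L / 2)) α) (hFint α 0)
  have hsplit2 := integral_add_adjacent_intervals (hFint α β) (hFint β 0)
  rw [← hsplit1, ← hsplit2]
  linarith
end

section
/- Let λ > 0 and h : ℝ → ℝ continuous, L-periodic, even, non-constant, non-decreasing on (−L/2,0), and φ = G_λ * h the solution of λφ − φ'' = h. Then φ''(0) < 0 and φ''(−L/2) > 0. -/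
open Set

lemma aux_diff {f : ℝ → ℝ} (hf : ContDiff ℝ 2 f) :
    Differentiable ℝ f ∧ Differentiable ℝ (deriv f) ∧ Continuous (deriv (deriv f)) := by
  have h2 : (2 : WithTop ℕ∞) = 1 + 1 := by norm_num
  rw [h2, contDiff_succ_iff_deriv] at hf
  obtain ⟨h1, -, h3⟩ := hf
  rw [contDiff_one_iff_deriv] at h3
  exact ⟨h1, h3.1, h3.2⟩

/-- Second derivative test: at a global max, f'' ≤ 0. -/
lemma aux_sdt {f : ℝ → ℝ} (hf : ContDiff ℝ 2 f) {a : ℝ} (hmax : ∀ x, f x ≤ f a) :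
    deriv (deriv f) a ≤ 0 := by
  obtain ⟨hd1, hd2, hc2⟩ := aux_diff hf
  by_contra hpos
  push_neg at hpos
  have hda : deriv f a = 0 :=
    IsLocalMax.deriv_eq_zero (Filter.Eventually.of_forall hmax)
  obtain ⟨δ, hδ, hball⟩ := Metric.eventually_nhds_iff.1
    (hc2.continuousAt.eventually_mem (isOpen_Ioi.mem_nhds hpos))
  set b := a + δ / 2 with hb
  have hab : a < b := by simp [hb]; linarith
  -- deriv f is strictly monotone on Icc a b
  have h1 : StrictMonoOn (deriv f) (Icc a b) := by
    apply strictMonoOn_of_deriv_pos (convex_Icc a b) hd2.continuous.continuousOn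
    intro x hx
    rw [interior_Icc] at hx
    have hx2 : x < a + δ / 2 := hx.2
    have hx1 : a < x := hx.1
    have : dist x a < δ := by
      rw [Real.dist_eq, abs_lt]
      constructor <;> linarith
    exact hball this
  -- hence deriv f > 0 on Ioo a b
  have h2 : ∀ x ∈ Ioo a b, 0 < deriv f x := by
    intro x hx
    have := h1 (left_mem_Icc.2 hab.le) ⟨hx.1.le, hx.2.le⟩ hx.1
    rwa [hda] at this
  have h3 : StrictMonoOn f (Icc a b) := by
    apply strictMonoOn_of_deriv_pos (convex_Icc a b) hd1.continuous.continuousOn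
    intro x hx
    rw [interior_Icc] at hx
    exact h2 x hx
  have := h3 (left_mem_Icc.2 hab.le) (right_mem_Icc.2 hab.le) hab
  exact absurd (hmax b) (by linarith)

/-- Grönwall-type uniqueness: u ≥ 0, u'' ≤ l u, u a = 0 ⇒ u = 0 on [a, ∞). -/
lemma aux_gronwall {l : ℝ} (hl : 0 < l) {u : ℝ → ℝ} (hu : ContDiff ℝ 2 u)
    (hnn : ∀ x, 0 ≤ u x) (hineq : ∀ x, deriv (deriv u) x ≤ l * u x)
    {a : ℝ} (ha : u a = 0) : ∀ x, a ≤ x → u x = 0 := by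
  obtain ⟨hd1, hd2, hc2⟩ := aux_diff hu
  set c := Real.sqrt l with hc
  have hc0 : 0 < c := Real.sqrt_pos.2 hl
  have hcsq : c * c = l := Real.mul_self_sqrt hl.le
  have hda : deriv u a = 0 := by
    apply IsLocalMin.deriv_eq_zero
    apply Filter.Eventually.of_forall
    intro x; rw [ha]; exact hnn x
  set w : ℝ → ℝ := fun x => deriv u x + c * u x with hw
  have hwderiv : ∀ x, HasDerivAt w (deriv (deriv u) x + c * deriv u x) x := by
    intro x
    exact ((hd2 x).hasDerivAt).add (((hd1 x).hasDerivAt).const_mul c)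
  set g : ℝ → ℝ := fun x => Real.exp (-c * x) * w x with hg
  have hgderiv : ∀ x, HasDerivAt g
      ((-c * Real.exp (-c * x)) * w x
        + Real.exp (-c * x) * (deriv (deriv u) x + c * deriv u x)) x := by
    intro x
    have he : HasDerivAt (fun x : ℝ => Real.exp (-c * x)) (-c * Real.exp (-c * x)) x := by
      have := ((hasDerivAt_id x).const_mul (-c)).exp
      simpa [mul_comm] using this
    exact he.mul (hwderiv x)
  have hgderiv_nonpos : ∀ x, deriv g x ≤ 0 := by
    intro x
    rw [(hgderiv x).deriv]
    have h1 : deriv (deriv u) x + c * deriv u x ≤ c * w x := by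
      have := hineq x
      have hrw : c * (c * u x) = l * u x := by rw [← hcsq]; ring
      simp only [hw, mul_add]
      linarith
    have hexp : 0 < Real.exp (-c * x) := Real.exp_pos _
    calc (-c * Real.exp (-c * x)) * w x + Real.exp (-c * x) * (deriv (deriv u) x + c * deriv u x)
        ≤ (-c * Real.exp (-c * x)) * w x + Real.exp (-c * x) * (c * w x) := by
          exact add_le_add (le_refl _) (by nlinarith)
      _ = 0 := by ring
  have hganti : Antitone g := by
    apply antitone_of_deriv_nonpos (fun x => (hgderiv x).differentiableAt) hgderiv_nonpos
  have hwle : ∀ x, a ≤ x → w x ≤ 0 := by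
    intro x hx
    have := hganti hx
    have hga : g a = 0 := by simp [hg, hw, hda, ha]
    rw [hga] at this
    have hexp : 0 < Real.exp (-c * x) := Real.exp_pos _
    by_contra hcon
    push_neg at hcon
    have h2 : Real.exp (-c * x) * w x ≤ 0 := this
    nlinarith [mul_pos hexp hcon]
  -- u' ≤ -c u ≤ 0 on [a, ∞)
  have huanti : AntitoneOn u (Ici a) := by
    apply antitoneOn_of_deriv_nonpos (convex_Ici a) hd1.continuous.continuousOn
      (hd1.differentiableOn)
    intro x hx
    rw [interior_Ici] at hx
    have := hwle x (le_of_lt hx)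
    have := hnn x
    simp only [hw] at *
    nlinarith
  intro x hx
  have := huanti (self_mem_Ici) hx hx
  rw [ha] at this
  exact le_antisymm this (hnn x)

theorem stmt12 (l L : ℝ) (hl : 0 < l) (hL : 0 < L) (h φ : ℝ → ℝ)
    (hcont : Continuous h) (hper : Function.Periodic h L)
    (heven : ∀ x, h (-x) = h x)
    (hnc : ∃ x y, h x ≠ h y)
    (hmono : MonotoneOn h (Ioo (-(L / 2)) 0))
    (hφ : ContDiff ℝ 2 φ) (hφper : Function.Periodic φ L)
    (heq : ∀ x, l * φ x - deriv (deriv φ) x = h x) :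
    deriv (deriv φ) 0 < 0 ∧ 0 < deriv (deriv φ) (-(L / 2)) := by
  obtain ⟨hd1, hd2, hc2⟩ := aux_diff hφ
  -- Step 1: bounds of h : h(-L/2) ≤ h x ≤ h 0
  have hIcc : ∀ x ∈ Icc (-(L/2)) 0, h (-(L/2)) ≤ h x ∧ h x ≤ h 0 := by
    have hA1 : ∀ x ∈ Ioo (-(L/2)) 0, h x ≤ h 0 := by
      intro x hx
      have htend : Filter.Tendsto h (nhdsWithin 0 (Iio 0)) (nhds (h 0)) :=
        (hcont.tendsto 0).mono_left nhdsWithin_le_nhds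
      apply ge_of_tendsto htend
      filter_upwards [Ioo_mem_nhdsLT_of_mem (⟨hx.2, le_refl 0⟩ : (0:ℝ) ∈ Ioc x 0)] with y hy
      exact hmono hx ⟨lt_trans hx.1 hy.1, hy.2⟩ hy.1.le
    have hA2 : ∀ x ∈ Ioo (-(L/2)) 0, h (-(L/2)) ≤ h x := by
      intro x hx
      have htend : Filter.Tendsto h (nhdsWithin (-(L/2)) (Ioi (-(L/2)))) (nhds (h (-(L/2)))) :=
        (hcont.tendsto _).mono_left nhdsWithin_le_nhds
      apply le_of_tendsto htend
      filter_upwards [Ioo_mem_nhdsGT_of_mem (⟨le_refl _, hx.1⟩ : -(L/2) ∈ Ico (-(L/2)) x)] with y hy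
      exact hmono ⟨hy.1, lt_trans hy.2 hx.2⟩ hx hy.2.le
    have hm : -(L/4) ∈ Ioo (-(L/2)) 0 := by constructor <;> [linarith; linarith]
    have hA3 : h (-(L/2)) ≤ h 0 := le_trans (hA2 _ hm) (hA1 _ hm)
    intro x hx
    rcases eq_or_lt_of_le hx.1 with rfl | h1
    · exact ⟨le_refl _, hA3⟩
    rcases eq_or_lt_of_le hx.2 with rfl | h2
    · exact ⟨hA3, le_refl _⟩
    exact ⟨hA2 x ⟨h1, h2⟩, hA1 x ⟨h1, h2⟩⟩
  have hbound : ∀ x, h (-(L/2)) ≤ h x ∧ h x ≤ h 0 := by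
    have hIcc2 : ∀ x ∈ Icc (-(L/2)) (L/2), h (-(L/2)) ≤ h x ∧ h x ≤ h 0 := by
      intro x hx
      rcases le_total x 0 with hx0 | hx0
      · exact hIcc x ⟨hx.1, hx0⟩
      · rw [← heven x]
        exact hIcc (-x) ⟨by linarith [hx.2], by linarith⟩
    intro x
    obtain ⟨y, hy, hxy⟩ := hper.exists_mem_Ico hL x (-(L/2))
    rw [hxy]
    apply hIcc2
    exact ⟨hy.1, by linarith [hy.2]⟩
  -- Step 2: max principle: l φ x ≤ h 0 and h (-(L/2)) ≤ l φ x for all x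
  have hmaxmin : ∀ x, h (-(L/2)) ≤ l * φ x ∧ l * φ x ≤ h 0 := by
    obtain ⟨x0, -, hx0⟩ := isCompact_Icc.exists_isMaxOn (α := ℝ) (s := Icc 0 L)
      (nonempty_Icc.2 hL.le) hφ.continuous.continuousOn
    obtain ⟨x1, -, hx1⟩ := isCompact_Icc.exists_isMinOn (α := ℝ) (s := Icc 0 L)
      (nonempty_Icc.2 hL.le) hφ.continuous.continuousOn
    have hglobmax : ∀ x, φ x ≤ φ x0 := by
      intro x
      obtain ⟨y, hy, hxy⟩ := hφper.exists_mem_Ico₀ hL x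
      rw [hxy]
      exact hx0 ⟨hy.1, hy.2.le⟩
    have hglobmin : ∀ x, φ x1 ≤ φ x := by
      intro x
      obtain ⟨y, hy, hxy⟩ := hφper.exists_mem_Ico₀ hL x
      rw [hxy]
      exact hx1 ⟨hy.1, hy.2.le⟩
    have hd20 : deriv (deriv φ) x0 ≤ 0 := aux_sdt hφ hglobmax
    have hd21 : 0 ≤ deriv (deriv φ) x1 := by
      have hneg : ContDiff ℝ 2 (fun x => -φ x) := hφ.neg
      have key : deriv (deriv (fun x => -φ x)) x1 ≤ 0 :=
        aux_sdt hneg (fun x => neg_le_neg (hglobmin x))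
      have e1 : deriv (fun x => -φ x) = fun x => -(deriv φ x) := by
        funext x; exact deriv.neg
      rw [e1] at key
      have e2 : deriv (fun x => -(deriv φ x)) x1 = -(deriv (deriv φ) x1) := deriv.neg
      rw [e2] at key
      linarith
    intro x
    constructor
    · calc h (-(L/2)) ≤ h x1 := (hbound x1).1
        _ ≤ h x1 + deriv (deriv φ) x1 := by linarith
        _ = l * φ x1 := by rw [← heq x1]; ring
        _ ≤ l * φ x := by
          have := hglobmin x; nlinarith
    · calc l * φ x ≤ l * φ x0 := by have := hglobmax x; nlinarith
        _ = h x0 + deriv (deriv φ) x0 := by rw [← heq x0]; ring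
        _ ≤ h x0 := by linarith
        _ ≤ h 0 := (hbound x0).2
  -- Step 3: if equality, then h is constant - contradiction machinery
  obtain ⟨p, q, hpq⟩ := hnc
  constructor
  · -- φ''(0) < 0
    by_contra hcon
    push_neg at hcon
    -- then l φ 0 ≥ h 0, so u := h 0 - l φ vanishes at 0
    set u : ℝ → ℝ := fun x => h 0 - l * φ x with hu
    have hucd : ContDiff ℝ 2 u := contDiff_const.sub (contDiff_const.mul hφ)
    have hud1 : deriv u = fun x => -(l * deriv φ x) := by
      funext x
      simp only [hu]
      rw [deriv_const_sub]
      rw [deriv_const_mul _ (hd1 x)]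
    have hud2 : ∀ x, deriv (deriv u) x = -(l * deriv (deriv φ) x) := by
      intro x
      rw [hud1]
      have : (fun x => -(l * deriv φ x)) = fun x => (-l) * deriv φ x := by funext y; ring
      rw [this, deriv_const_mul _ (hd2 x)]
      ring
    have hunn : ∀ x, 0 ≤ u x := fun x => by have := (hmaxmin x).2; simp [hu]; linarith
    have huineq : ∀ x, deriv (deriv u) x ≤ l * u x := by
      intro x
      rw [hud2]
      have hh := heq x
      have := (hbound x).2
      simp only [hu]
      nlinarith
    have hu0 : u 0 = 0 := by
      have h1 : (0:ℝ) ≤ h 0 - l * φ 0 := hunn 0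
      have h2 : l * φ 0 - deriv (deriv φ) 0 = h 0 := heq 0
      simp only [hu]
      linarith
    have hzero : ∀ x, 0 ≤ x → u x = 0 := aux_gronwall hl hucd hunn huineq hu0
    -- hence h is constant
    have hconst : ∀ x, 1 ≤ x → h x = h 0 := by
      intro x hx
      have hloc : ∀ᶠ y in nhds x, u y = 0 := by
        filter_upwards [Metric.ball_mem_nhds x (by norm_num : (0:ℝ) < 1/2)] with y hy
        apply hzero
        rw [Metric.mem_ball, Real.dist_eq, abs_lt] at hy
        linarith
      have hφconst : ∀ᶠ y in nhds x, φ y = h 0 / l := by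
        filter_upwards [hloc] with y hy
        simp only [hu] at hy
        rw [eq_div_iff hl.ne']
        linarith
      have hdφ : deriv φ =ᶠ[nhds x] (fun _ => 0) := by
        -- deriv of locally constant function is 0
        have : ∀ᶠ y in nhds x, ∀ᶠ z in nhds y, φ z = h 0 / l := hφconst.eventually_nhds
        filter_upwards [this] with y hy
        have : φ =ᶠ[nhds y] (fun _ => h 0 / l) := hy
        rw [this.deriv_eq]
        simp
      have hd2φ : deriv (deriv φ) x = 0 := by
        rw [hdφ.deriv_eq]
        simp
      have := heq x
      rw [hd2φ] at this
      have hφx : φ x = h 0 / l := hφconst.self_of_nhds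
      rw [hφx] at this
      have hlc : l * (h 0 / l) = h 0 := by
        rw [mul_comm, div_mul_cancel₀ _ hl.ne']
      linarith
    have hpq' : ∀ z : ℝ, h z = h 0 := by
      intro z
      obtain ⟨n, hn⟩ := exists_nat_gt ((1 - z) / L)
      have hz : 1 ≤ z + n * L := by
        have : (1 - z) / L < n := hn
        have := (div_lt_iff₀ hL).1 this
        linarith
      have heq2 : h (z + n * L) = h z := by
        have h5 := hper.sub_nat_mul_eq (x := z + n * L) (n := n)
        exact (by simpa using h5 : h z = h (z + n * L)).symm
      rw [← heq2]
      exact hconst _ hz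
    exact hpq (by rw [hpq' p, hpq' q])
  · -- φ''(-L/2) > 0
    by_contra hcon
    push_neg at hcon
    set v : ℝ → ℝ := fun x => l * φ x - h (-(L/2)) with hv
    have hvcd : ContDiff ℝ 2 v := (contDiff_const.mul hφ).sub contDiff_const
    have hvd1 : deriv v = fun x => l * deriv φ x := by
      funext x
      simp only [hv]
      rw [deriv_sub_const, deriv_const_mul _ (hd1 x)]
    have hvd2 : ∀ x, deriv (deriv v) x = l * deriv (deriv φ) x := by
      intro x
      rw [hvd1, deriv_const_mul _ (hd2 x)]
    have hvnn : ∀ x, 0 ≤ v x := fun x => by have := (hmaxmin x).1; simp [hv]; linarith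
    have hvineq : ∀ x, deriv (deriv v) x ≤ l * v x := by
      intro x
      rw [hvd2]
      have hh := heq x
      have := (hbound x).1
      simp only [hv]
      nlinarith
    have hv0 : v (-(L/2)) = 0 := by
      have h1 : (0:ℝ) ≤ l * φ (-(L/2)) - h (-(L/2)) := hvnn (-(L/2))
      have h2 := heq (-(L/2))
      simp only [hv]
      linarith
    have hzero : ∀ x, -(L/2) ≤ x → v x = 0 := aux_gronwall hl hvcd hvnn hvineq hv0
    have hconst : ∀ x, -(L/2) + 1 ≤ x → h x = h (-(L/2)) := by
      intro x hx
      have hloc : ∀ᶠ y in nhds x, v y = 0 := by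
        filter_upwards [Metric.ball_mem_nhds x (by norm_num : (0:ℝ) < 1/2)] with y hy
        apply hzero
        rw [Metric.mem_ball, Real.dist_eq, abs_lt] at hy
        linarith
      have hφconst : ∀ᶠ y in nhds x, φ y = h (-(L/2)) / l := by
        filter_upwards [hloc] with y hy
        simp only [hv] at hy
        rw [eq_div_iff hl.ne']
        linarith
      have hdφ : deriv φ =ᶠ[nhds x] (fun _ => 0) := by
        have : ∀ᶠ y in nhds x, ∀ᶠ z in nhds y, φ z = h (-(L/2)) / l := hφconst.eventually_nhds
        filter_upwards [this] with y hy
        have : φ =ᶠ[nhds y] (fun _ => h (-(L/2)) / l) := hy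
        rw [this.deriv_eq]
        simp
      have hd2φ : deriv (deriv φ) x = 0 := by
        rw [hdφ.deriv_eq]; simp
      have := heq x
      rw [hd2φ] at this
      have hφx : φ x = h (-(L/2)) / l := hφconst.self_of_nhds
      rw [hφx] at this
      have hlc : l * (h (-(L/2)) / l) = h (-(L/2)) := by
        rw [mul_comm, div_mul_cancel₀ _ hl.ne']
      linarith
    have hpq' : ∀ z : ℝ, h z = h (-(L/2)) := by
      intro z
      obtain ⟨n, hn⟩ := exists_nat_gt ((-(L/2) + 1 - z) / L)
      have hz : -(L/2) + 1 ≤ z + n * L := by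
        have := (div_lt_iff₀ hL).1 hn
        linarith
      have heq2 : h (z + n * L) = h z := by
        have h5 := hper.sub_nat_mul_eq (x := z + n * L) (n := n)
        exact (by simpa using h5 : h z = h (z + n * L)).symm
      rw [← heq2]
      exact hconst _ hz
    exact hpq (by rw [hpq' p, hpq' q])
end
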